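/- Theorem 1 (convergence of SLOTAlign to a critical point): Suppose the iterates (π^k, α^k) ∈ C × Θ, k ≥ 0, are generated by the alternating updates α^{k+1} = argmin_{α∈Θ}{⟨∇_α F(π^k, α^k), α⟩ + (1/(2τ))‖α − α^k‖²} and π^{k+1} = argmin_{π∈C}{⟨∇_π F(π^k, α^{k+1}), π⟩ + (1/η)KL(π‖π^k)} with each π^k entrywise positive, where 0 < τ < 1/L_f^α and 0 < ε < η < 1/L_f^π with L_f^α and L_f^π the block gradient Lipschitz moduli of F on C × Θ. If (π^∞, α^∞) is the limit of a convergent subsequence (π^{n_k}, α^{n_k}) and π^∞ is entrywise positive, then (π^∞, α^∞) is a critical point of F̄(π, α) = F(π, α) + I_C(π) + I_Θ(α); that is, −∇_α F(π^∞, α^∞) lies in the normal cone of Θ at α^∞ and −∇_π F(π^∞, α^∞) lies in the normal cone of C at π^∞, or equivalently ⟨∇_α F(π^∞, α^∞), α − α^∞⟩ ≥ 0 for all α ∈ Θ and ⟨∇_π F(π^∞, α^∞), π − π^∞⟩ ≥ 0 for all π ∈ C. -/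

import Mathlib

open scoped RealInnerProductSpace BigOperators

/-- The Kullback–Leibler divergence between two couplings (viewed as elements of the
Euclidean space of `n×m` arrays), `KL(P‖Q) = Σ_p (P_p log(P_p/Q_p) − P_p + Q_p)`
(with the convention `0·log 0 = 0`, automatic since `Real.log 0 = 0`). -/
noncomputable def vecKL {ι : Type*} [Fintype ι] (P Q : ι → ℝ) : ℝ :=
  ∑ p, (P p * Real.log (P p / Q p) - P p + Q p)

/-- The set `Θ = Δ_K × Δ_K` of concatenated weight vectors `α = (β_s, β_t)`:
all entries are nonnegative and each block sums to `1`. -/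
def weightSet (K : ℕ) : Set (EuclideanSpace ℝ (Fin K ⊕ Fin K)) :=
  {α | (∀ p, 0 ≤ α p) ∧ (∑ q, α (Sum.inl q) = 1) ∧ (∑ q, α (Sum.inr q) = 1)}

/-- The transport polytope with uniform marginals, viewed inside the Euclidean space
of `n×m` arrays (Frobenius norm). -/
def transportSet (n m : ℕ) : Set (EuclideanSpace ℝ (Fin n × Fin m)) :=
  {π | (∀ p, 0 ≤ π p) ∧ (∀ i, ∑ k, π (i, k) = 1 / (n : ℝ)) ∧
    (∀ k, ∑ i, π (i, k) = 1 / (m : ℝ))}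

/-- The SLOTAlign objective `F(π, α)` with `α = (β_s, β_t)`:
`F = (1/n²) Σᵢⱼ (Σ_q βs_q Ds_q(i,j))² + (1/m²) Σₖₗ (Σ_q βt_q Dt_q(k,l))²
  − 2 tr((Σ_q βs_q Ds_q) π (Σ_q βt_q Dt_q) πᵀ)`,
the trace written out as
`Σᵢⱼₖₗ (Σ_q βs_q Ds_q(i,j)) π(j,k) (Σ_q βt_q Dt_q(k,l)) π(i,l)`. -/
noncomputable def slotFE {n m K : ℕ} (Ds : Fin K → Matrix (Fin n) (Fin n) ℝ)
    (Dt : Fin K → Matrix (Fin m) (Fin m) ℝ)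
    (π : EuclideanSpace ℝ (Fin n × Fin m))
    (α : EuclideanSpace ℝ (Fin K ⊕ Fin K)) : ℝ :=
  (1 / (n : ℝ) ^ 2) * ∑ i, ∑ j, (∑ q, α (Sum.inl q) * Ds q i j) ^ 2
  + (1 / (m : ℝ) ^ 2) * ∑ k, ∑ l, (∑ q, α (Sum.inr q) * Dt q k l) ^ 2
  - 2 * ∑ i, ∑ j, ∑ k, ∑ l,
      (∑ q, α (Sum.inl q) * Ds q i j) * π (j, k)
        * (∑ q, α (Sum.inr q) * Dt q k l) * π (i, l)


section Auxiliary

open Filter Real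

/-! ### Scalar KL-term inequalities -/

lemma klTerm_ge_sq_sqrt {p q : ℝ} (hp : 0 < p) (hq : 0 < q) :
    (Real.sqrt p - Real.sqrt q) ^ 2 ≤ p * Real.log (p / q) - p + q := by
  have hsp := Real.sqrt_pos.2 hp
  have hsq := Real.sqrt_pos.2 hq
  have hpq : 0 < p / q := div_pos hp hq
  have hsd : Real.sqrt (p / q) = Real.sqrt p / Real.sqrt q := Real.sqrt_div hp.le q
  have h1 : 1 - (Real.sqrt p / Real.sqrt q)⁻¹ ≤ Real.log (p / q) / 2 := by
    have := Real.one_sub_inv_le_log_of_pos (Real.sqrt_pos.2 hpq)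
    rwa [Real.log_sqrt hpq.le, hsd] at this
  have h1' : 1 - Real.sqrt q / Real.sqrt p ≤ Real.log (p / q) / 2 := by
    rwa [inv_div] at h1
  have h2 : 2 * p * (1 - Real.sqrt q / Real.sqrt p) ≤ p * Real.log (p / q) := by
    nlinarith
  have h3 : p * (Real.sqrt q / Real.sqrt p) = Real.sqrt p * Real.sqrt q := by
    field_simp
    nlinarith [Real.sq_sqrt hp.le]
  have hsqp : Real.sqrt p ^ 2 = p := Real.sq_sqrt hp.le
  have hsqq : Real.sqrt q ^ 2 = q := Real.sq_sqrt hq.le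
  nlinarith

lemma klTerm_nonneg {p q : ℝ} (hp : 0 < p) (hq : 0 < q) :
    0 ≤ p * Real.log (p / q) - p + q :=
  le_trans (sq_nonneg _) (klTerm_ge_sq_sqrt hp hq)

lemma sq_diff_le_two_klTerm {p q : ℝ} (hp : 0 < p) (hq : 0 < q)
    (hp1 : p ≤ 1/2) (hq1 : q ≤ 1/2) :
    (p - q) ^ 2 ≤ 2 * (p * Real.log (p / q) - p + q) := by
  have h := klTerm_ge_sq_sqrt hp hq
  have hsqp : Real.sqrt p ^ 2 = p := Real.sq_sqrt hp.le
  have hsqq : Real.sqrt q ^ 2 = q := Real.sq_sqrt hq.le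
  have key : (p - q) ^ 2 ≤ 2 * (Real.sqrt p - Real.sqrt q) ^ 2 := by
    have hfac : p - q = (Real.sqrt p - Real.sqrt q) * (Real.sqrt p + Real.sqrt q) := by
      nlinarith
    have hsum : (Real.sqrt p + Real.sqrt q) ^ 2 ≤ 2 := by
      nlinarith [sq_nonneg (Real.sqrt p - Real.sqrt q)]
    calc (p - q) ^ 2 = (Real.sqrt p - Real.sqrt q) ^ 2 * (Real.sqrt p + Real.sqrt q) ^ 2 := by
          rw [hfac]; ring
      _ ≤ (Real.sqrt p - Real.sqrt q) ^ 2 * 2 :=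
          mul_le_mul_of_nonneg_left hsum (sq_nonneg _)
      _ = 2 * (Real.sqrt p - Real.sqrt q) ^ 2 := by ring
  linarith

/-! ### vecKL facts -/

lemma vecKL_nonneg {ι : Type*} [Fintype ι] {P Q : ι → ℝ}
    (hP : ∀ e, 0 < P e) (hQ : ∀ e, 0 < Q e) : 0 ≤ vecKL P Q :=
  Finset.sum_nonneg fun e _ => klTerm_nonneg (hP e) (hQ e)

lemma vecKL_self {ι : Type*} [Fintype ι] {P : ι → ℝ} (hP : ∀ e, 0 < P e) :
    vecKL P P = 0 := by
  unfold vecKL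
  apply Finset.sum_eq_zero
  intro e _
  rw [div_self (ne_of_gt (hP e)), Real.log_one]
  ring

lemma eunorm_sq {ι : Type*} [Fintype ι] (x : EuclideanSpace ℝ ι) :
    ‖x‖ ^ 2 = ∑ p, (x p) ^ 2 := by
  rw [EuclideanSpace.norm_eq, Real.sq_sqrt (Finset.sum_nonneg fun p _ => sq_nonneg _)]
  simp [Real.norm_eq_abs, sq_abs]

lemma vecKL_tendsto_snd {ι : Type*} [Fintype ι] {p : ι → ℝ} (hp : ∀ e, 0 ≤ p e)
    {Q : ℕ → EuclideanSpace ℝ ι} {Qi : EuclideanSpace ℝ ι} (hQi : ∀ e, 0 < Qi e)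
    (hQ : ∀ e, Filter.Tendsto (fun j => Q j e) Filter.atTop (nhds (Qi e))) :
    Filter.Tendsto (fun j => vecKL p (Q j)) Filter.atTop (nhds (vecKL p Qi)) := by
  unfold vecKL
  apply tendsto_finset_sum
  intro e _
  rcases eq_or_lt_of_le (hp e) with h | h
  · have heq : (fun j => p e * Real.log (p e / Q j e) - p e + Q j e) = fun j => Q j e := by
      funext j; rw [← h]; ring
    rw [heq, ← h]
    simpa using hQ e
  · have hdiv : Filter.Tendsto (fun j => p e / Q j e) Filter.atTop (nhds (p e / Qi e)) :=
      tendsto_const_nhds.div (hQ e) (ne_of_gt (hQi e))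
    have hlog : Filter.Tendsto (fun j => Real.log (p e / Q j e)) Filter.atTop
        (nhds (Real.log (p e / Qi e))) :=
      ((Real.continuousAt_log (ne_of_gt (div_pos h (hQi e)))).tendsto).comp hdiv
    exact ((tendsto_const_nhds.mul hlog).sub tendsto_const_nhds).add (hQ e)

/-- derivative of `t ↦ KL(x + t d ‖ x)` at `0` is `0`. -/
lemma vecKL_slope_tendsto {ι : Type*} [Fintype ι] (x d : ι → ℝ) (hx : ∀ e, 0 < x e) :
    Filter.Tendsto
      (fun j : ℕ => vecKL (fun e => x e + (1 / (j + 1 : ℝ)) * d e) x / (1 / (j + 1 : ℝ)))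
      Filter.atTop (nhds 0) := by
  set ψ : ℝ → ℝ := fun t => vecKL (fun e => x e + t * d e) x with hψ
  have hψ0 : ψ 0 = 0 := by
    simp only [hψ, zero_mul, add_zero]
    exact vecKL_self hx
  have hder : HasDerivAt ψ 0 0 := by
    have : HasDerivAt (fun t => ∑ e, ((x e + t * d e) * Real.log ((x e + t * d e) / x e)
        - (x e + t * d e) + x e)) (∑ e : ι, (0:ℝ)) 0 := by
      apply HasDerivAt.fun_sum
      intro e _
      have h1 : HasDerivAt (fun t : ℝ => x e + t * d e) (d e) 0 := by
        simpa using ((hasDerivAt_id (0:ℝ)).mul_const (d e)).const_add (x e)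
      have h2 : HasDerivAt (fun t : ℝ => (x e + t * d e) / x e) (d e / x e) 0 :=
        h1.div_const (x e)
      have hne : (x e + 0 * d e) / x e ≠ 0 := by
        simp [div_self (ne_of_gt (hx e))]
      have h3 : HasDerivAt (fun t : ℝ => Real.log ((x e + t * d e) / x e))
          ((d e / x e) / ((x e + 0 * d e) / x e)) 0 := h2.log hne
      have h4 := (h1.mul h3).sub h1
      have h5 := h4.add_const (x e)
      convert h5 using 1
      · rfl
      have hxe := ne_of_gt (hx e)
      field_simp
      simp [hxe]
    simp only [hψ, vecKL]
    simpa using this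
  have hslope := hasDerivAt_iff_tendsto_slope.1 hder
  have htj : Filter.Tendsto (fun j : ℕ => 1 / (j + 1 : ℝ)) Filter.atTop
      (nhdsWithin 0 {(0:ℝ)}ᶜ) := by
    apply tendsto_nhdsWithin_of_tendsto_nhds_of_eventually_within
    · exact tendsto_one_div_add_atTop_nhds_zero_nat
    · filter_upwards with j
      have : (0:ℝ) < 1 / (j + 1 : ℝ) := by positivity
      exact ne_of_gt this
  have := hslope.comp htj
  have heq : (fun j : ℕ => slope ψ 0 (1 / (j + 1 : ℝ)))
      = fun j : ℕ => ψ (1 / (j + 1 : ℝ)) / (1 / (j + 1 : ℝ)) := by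
    funext j
    rw [slope_def_field, hψ0]
    simp [div_eq_mul_inv]
  rw [show (fun t => slope ψ 0 t) ∘ (fun j : ℕ => 1 / (j + 1 : ℝ))
      = fun j : ℕ => slope ψ 0 (1 / (j + 1 : ℝ)) from rfl, heq] at this
  exact this

/-! ### Transport polytope facts -/

lemma transport_entry_le_half {n m : ℕ} {P : EuclideanSpace ℝ (Fin n × Fin m)}
    (hP : P ∈ transportSet n m) (hnm : 2 ≤ n ∨ 2 ≤ m) (p : Fin n × Fin m) :
    P p ≤ 1 / 2 := by
  obtain ⟨i, k⟩ := p
  rcases hnm with hn | hm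
  · have h1 : P (i, k) ≤ ∑ k', P (i, k') :=
      Finset.single_le_sum (fun k' _ => hP.1 (i, k')) (Finset.mem_univ k)
    have h2 : (1 : ℝ) / n ≤ 1 / 2 := by
      apply one_div_le_one_div_of_le (by norm_num)
      exact_mod_cast hn
    calc P (i, k) ≤ 1 / (n:ℝ) := by rw [← hP.2.1 i]; exact h1
      _ ≤ 1 / 2 := h2
  · have h1 : P (i, k) ≤ ∑ i', P (i', k) :=
      Finset.single_le_sum (fun i' _ => hP.1 (i', k)) (Finset.mem_univ i)
    have h2 : (1 : ℝ) / m ≤ 1 / 2 := by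
      apply one_div_le_one_div_of_le (by norm_num)
      exact_mod_cast hm
    calc P (i, k) ≤ 1 / (m:ℝ) := by rw [← hP.2.2 k]; exact h1
      _ ≤ 1 / 2 := h2

lemma transport_eq_of_small {n m : ℕ} {P Q : EuclideanSpace ℝ (Fin n × Fin m)}
    (hP : P ∈ transportSet n m) (hQ : Q ∈ transportSet n m)
    (hnm : ¬ (2 ≤ n ∨ 2 ≤ m)) : P = Q := by
  push_neg at hnm
  by_cases hne : Nonempty (Fin n × Fin m)
  · obtain ⟨⟨i0, k0⟩⟩ := hne
    have hnpos : 0 < n := i0.pos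
    have hmpos : 0 < m := k0.pos
    have hn : n = 1 := by omega
    have hm : m = 1 := by omega
    subst hn; subst hm
    have hval : ∀ (R : EuclideanSpace ℝ (Fin 1 × Fin 1)), R ∈ transportSet 1 1 →
        ∀ p, R p = 1 := by
      intro R hR p
      obtain ⟨i, k⟩ := p
      have hi : i = 0 := Subsingleton.elim i 0
      have hsum := hR.2.2 k
      rw [Fin.sum_univ_one] at hsum
      rw [hi, hsum]
      norm_num
    apply PiLp.ext
    intro p
    rw [hval P hP p, hval Q hQ p]
  · have : IsEmpty (Fin n × Fin m) := not_nonempty_iff.mp hne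
    apply PiLp.ext
    intro p
    exact isEmptyElim p

lemma transport_pinsker {n m : ℕ} {P Q : EuclideanSpace ℝ (Fin n × Fin m)}
    (hP : P ∈ transportSet n m) (hQ : Q ∈ transportSet n m)
    (hPpos : ∀ p, 0 < P p) (hQpos : ∀ p, 0 < Q p) :
    ‖P - Q‖ ^ 2 / 2 ≤ vecKL P Q := by
  by_cases hnm : 2 ≤ n ∨ 2 ≤ m
  · have hsum : ‖P - Q‖ ^ 2 = ∑ p, (P p - Q p) ^ 2 := by
      rw [eunorm_sq]
      exact Finset.sum_congr rfl fun p _ => by rw [PiLp.sub_apply]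
    have hterm : ∀ p ∈ Finset.univ, (P p - Q p) ^ 2 / 2
        ≤ P p * Real.log (P p / Q p) - P p + Q p := by
      intro p _
      have := sq_diff_le_two_klTerm (hPpos p) (hQpos p)
        (transport_entry_le_half hP hnm p) (transport_entry_le_half hQ hnm p)
      linarith
    calc ‖P - Q‖ ^ 2 / 2 = ∑ p, (P p - Q p) ^ 2 / 2 := by
          rw [hsum, Finset.sum_div]
      _ ≤ vecKL P Q := Finset.sum_le_sum hterm
  · have hPQ : P = Q := transport_eq_of_small hP hQ hnm
    subst hPQ
    rw [vecKL_self hPpos]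
    simp

section ConvexComb

lemma weightSet_comb {K : ℕ} {a b : EuclideanSpace ℝ (Fin K ⊕ Fin K)}
    (ha : a ∈ weightSet K) (hb : b ∈ weightSet K) {t : ℝ} (ht0 : 0 ≤ t) (ht1 : t ≤ 1) :
    a + t • (b - a) ∈ weightSet K := by
  have happ : ∀ p, (a + t • (b - a)) p = a p + t * (b p - a p) := by
    intro p
    rw [PiLp.add_apply, PiLp.smul_apply, PiLp.sub_apply, smul_eq_mul]
  refine ⟨fun p => ?_, ?_, ?_⟩
  · rw [happ]
    nlinarith [ha.1 p, hb.1 p]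
  · simp only [happ]
    rw [Finset.sum_add_distrib, ← Finset.mul_sum, Finset.sum_sub_distrib,
      ha.2.1, hb.2.1]
    ring
  · simp only [happ]
    rw [Finset.sum_add_distrib, ← Finset.mul_sum, Finset.sum_sub_distrib,
      ha.2.2, hb.2.2]
    ring

lemma transportSet_comb {n m : ℕ} {a b : EuclideanSpace ℝ (Fin n × Fin m)}
    (ha : a ∈ transportSet n m) (hb : b ∈ transportSet n m) {t : ℝ}
    (ht0 : 0 ≤ t) (ht1 : t ≤ 1) :
    a + t • (b - a) ∈ transportSet n m := by
  have happ : ∀ p, (a + t • (b - a)) p = a p + t * (b p - a p) := by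
    intro p
    rw [PiLp.add_apply, PiLp.smul_apply, PiLp.sub_apply, smul_eq_mul]
  refine ⟨fun p => ?_, fun i => ?_, fun k => ?_⟩
  · rw [happ]
    nlinarith [ha.1 p, hb.1 p]
  · simp only [happ]
    rw [Finset.sum_add_distrib, ← Finset.mul_sum, Finset.sum_sub_distrib,
      ha.2.1 i, hb.2.1 i]
    ring
  · simp only [happ]
    rw [Finset.sum_add_distrib, ← Finset.mul_sum, Finset.sum_sub_distrib,
      ha.2.2 k, hb.2.2 k]
    ring

end ConvexComb

/-! ### Gradient and descent machinery -/

section Gradient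

variable {H H1 H2 : Type*} [NormedAddCommGroup H] [InnerProductSpace ℝ H] [CompleteSpace H]
  [NormedAddCommGroup H1] [InnerProductSpace ℝ H1] [CompleteSpace H1]
  [NormedAddCommGroup H2] [InnerProductSpace ℝ H2] [CompleteSpace H2]

lemma inner_gradient_eq_fderiv {f : H → ℝ} (hf : Differentiable ℝ f) (z v : H) :
    ⟪gradient f z, v⟫ = fderiv ℝ f z v := by
  have h := (hf z).hasGradientAt
  rw [hasGradientAt_iff_hasFDerivAt] at h
  rw [h.fderiv]
  simp [InnerProductSpace.toDual_apply_apply]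

lemma descent_lemma {f : H → ℝ} (hf : Differentiable ℝ f) {L : ℝ}
    (hLip : ∀ a b : H, ‖gradient f a - gradient f b‖ ≤ L * ‖a - b‖) (x y : H) :
    f y ≤ f x + ⟪gradient f x, y - x⟫ + L / 2 * ‖y - x‖ ^ 2 := by
  set v := y - x with hv
  set c : ℝ := ⟪gradient f x, v⟫ with hc
  have hpath : ∀ t : ℝ, HasDerivAt (fun t : ℝ => x + t • v) v t := by
    intro t
    simpa using ((hasDerivAt_id t).smul_const v).const_add x
  have hg : ∀ t : ℝ, HasDerivAt (fun t : ℝ => f (x + t • v)) ⟪gradient f (x + t • v), v⟫ t := by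
    intro t
    have := (hf (x + t • v)).hasFDerivAt.comp_hasDerivAt t (hpath t)
    rw [inner_gradient_eq_fderiv hf]
    exact this
  set h : ℝ → ℝ := fun t => f (x + t • v) - t * c - (L / 2 * ‖v‖ ^ 2) * t ^ 2 with hh
  have hder : ∀ t : ℝ, HasDerivAt h
      (⟪gradient f (x + t • v), v⟫ - c - L * t * ‖v‖ ^ 2) t := by
    intro t
    have h2 : HasDerivAt (fun t : ℝ => t * c) c t := by
      simpa using (hasDerivAt_id t).mul_const c
    have h3 : HasDerivAt (fun t : ℝ => (L / 2 * ‖v‖ ^ 2) * t ^ 2)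
        (L * t * ‖v‖ ^ 2) t := by
      have := (hasDerivAt_pow 2 t).const_mul (L / 2 * ‖v‖ ^ 2)
      refine this.congr_deriv ?_
      push_cast
      ring
    exact ((hg t).sub h2).sub h3
  have hanti : AntitoneOn h (Set.Icc (0 : ℝ) 1) := by
    apply antitoneOn_of_deriv_nonpos (convex_Icc 0 1)
    · exact (fun t _ => (hder t).differentiableAt.continuousAt.continuousWithinAt)
    · exact fun t _ => (hder t).differentiableAt.differentiableWithinAt
    · intro t ht
      rw [interior_Icc] at ht
      rw [(hder t).deriv]
      have hb : ⟪gradient f (x + t • v), v⟫ - c ≤ L * t * ‖v‖ ^ 2 := by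
        rw [hc, ← inner_sub_left]
        calc ⟪gradient f (x + t • v) - gradient f x, v⟫
            ≤ ‖gradient f (x + t • v) - gradient f x‖ * ‖v‖ := real_inner_le_norm _ _
          _ ≤ (L * ‖x + t • v - x‖) * ‖v‖ :=
              mul_le_mul_of_nonneg_right (hLip _ _) (norm_nonneg _)
          _ = L * t * ‖v‖ ^ 2 := by
              rw [show x + t • v - x = t • v by abel, norm_smul]
              simp [abs_of_pos ht.1]
              ring
      linarith
  have h10 : h 1 ≤ h 0 := hanti (by norm_num) (by norm_num) (by norm_num)
  have h0 : h 0 = f x := by simp [hh]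
  have h1 : h 1 = f y - c - L / 2 * ‖v‖ ^ 2 := by simp [hh, hv]
  rw [h0, h1] at h10
  linarith

lemma slice2_differentiable {Φ : H1 × H2 → ℝ} (hΦ : ContDiff ℝ 1 Φ) (u : H1) :
    Differentiable ℝ (fun x => Φ (u, x)) :=
  (hΦ.differentiable one_ne_zero).comp ((differentiable_const u).prodMk differentiable_id)

lemma slice1_differentiable {Φ : H1 × H2 → ℝ} (hΦ : ContDiff ℝ 1 Φ) (u : H2) :
    Differentiable ℝ (fun x => Φ (x, u)) :=
  (hΦ.differentiable one_ne_zero).comp (differentiable_id.prodMk (differentiable_const u))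

lemma grad_slice2_eq {Φ : H1 × H2 → ℝ} (hΦ : ContDiff ℝ 1 Φ) (u : H1) (a : H2) :
    gradient (fun x => Φ (u, x)) a =
      (InnerProductSpace.toDual ℝ H2).symm
        ((fderiv ℝ Φ (u, a)).comp (ContinuousLinearMap.inr ℝ H1 H2)) := by
  have hF : HasFDerivAt (fun x => Φ (u, x))
      ((fderiv ℝ Φ (u, a)).comp (ContinuousLinearMap.inr ℝ H1 H2)) a :=
    ((hΦ.differentiable one_ne_zero) (u, a)).hasFDerivAt.comp a (hasFDerivAt_prodMk_right u a)
  exact hF.hasGradientAt.gradient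

lemma grad_slice1_eq {Φ : H1 × H2 → ℝ} (hΦ : ContDiff ℝ 1 Φ) (a : H1) (u : H2) :
    gradient (fun x => Φ (x, u)) a =
      (InnerProductSpace.toDual ℝ H1).symm
        ((fderiv ℝ Φ (a, u)).comp (ContinuousLinearMap.inl ℝ H1 H2)) := by
  have hF : HasFDerivAt (fun x => Φ (x, u))
      ((fderiv ℝ Φ (a, u)).comp (ContinuousLinearMap.inl ℝ H1 H2)) a :=
    ((hΦ.differentiable one_ne_zero) (a, u)).hasFDerivAt.comp a (hasFDerivAt_prodMk_left a u)
  exact hF.hasGradientAt.gradient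

lemma grad_slice2_continuous {Φ : H1 × H2 → ℝ} (hΦ : ContDiff ℝ 1 Φ) :
    Continuous (fun pa : H1 × H2 => gradient (fun x => Φ (pa.1, x)) pa.2) := by
  have : (fun pa : H1 × H2 => gradient (fun x => Φ (pa.1, x)) pa.2) =
      fun pa => (InnerProductSpace.toDual ℝ H2).symm
        ((fderiv ℝ Φ pa).comp (ContinuousLinearMap.inr ℝ H1 H2)) := by
    funext pa
    exact grad_slice2_eq hΦ pa.1 pa.2
  rw [this]
  apply (InnerProductSpace.toDual ℝ H2).symm.continuous.comp
  exact (((ContinuousLinearMap.compL ℝ H2 (H1 × H2) ℝ).flip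
    (ContinuousLinearMap.inr ℝ H1 H2)).continuous).comp (hΦ.continuous_fderiv one_ne_zero)

lemma grad_slice1_continuous {Φ : H1 × H2 → ℝ} (hΦ : ContDiff ℝ 1 Φ) :
    Continuous (fun pa : H1 × H2 => gradient (fun x => Φ (x, pa.2)) pa.1) := by
  have : (fun pa : H1 × H2 => gradient (fun x => Φ (x, pa.2)) pa.1) =
      fun pa => (InnerProductSpace.toDual ℝ H1).symm
        ((fderiv ℝ Φ pa).comp (ContinuousLinearMap.inl ℝ H1 H2)) := by
    funext pa
    exact grad_slice1_eq hΦ pa.1 pa.2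
  rw [this]
  apply (InnerProductSpace.toDual ℝ H1).symm.continuous.comp
  exact (((ContinuousLinearMap.compL ℝ H1 (H1 × H2) ℝ).flip
    (ContinuousLinearMap.inl ℝ H1 H2)).continuous).comp (hΦ.continuous_fderiv one_ne_zero)

end Gradient

/-! ### Smoothness of the SLOTAlign objective -/

set_option maxHeartbeats 1000000 in
lemma slotFE_contDiff {n m K : ℕ} (Ds : Fin K → Matrix (Fin n) (Fin n) ℝ)
    (Dt : Fin K → Matrix (Fin m) (Fin m) ℝ) :
    ContDiff ℝ 1 (fun pa : (EuclideanSpace ℝ (Fin n × Fin m)) ×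
      (EuclideanSpace ℝ (Fin K ⊕ Fin K)) => slotFE Ds Dt pa.1 pa.2) := by
  have hπ : ∀ p, ContDiff ℝ 1 (fun pa : (EuclideanSpace ℝ (Fin n × Fin m)) ×
      (EuclideanSpace ℝ (Fin K ⊕ Fin K)) => pa.1 p) :=
    fun p => ((EuclideanSpace.proj (𝕜 := ℝ) p).contDiff).comp contDiff_fst
  have hα : ∀ p, ContDiff ℝ 1 (fun pa : (EuclideanSpace ℝ (Fin n × Fin m)) ×
      (EuclideanSpace ℝ (Fin K ⊕ Fin K)) => pa.2 p) :=
    fun p => ((EuclideanSpace.proj (𝕜 := ℝ) p).contDiff).comp contDiff_snd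
  have hS : ∀ (i j : Fin n), ContDiff ℝ 1 (fun pa : (EuclideanSpace ℝ (Fin n × Fin m)) ×
      (EuclideanSpace ℝ (Fin K ⊕ Fin K)) => ∑ q, pa.2 (Sum.inl q) * Ds q i j) :=
    fun i j => ContDiff.sum fun q _ => (hα (Sum.inl q)).mul contDiff_const
  have hT : ∀ (k l : Fin m), ContDiff ℝ 1 (fun pa : (EuclideanSpace ℝ (Fin n × Fin m)) ×
      (EuclideanSpace ℝ (Fin K ⊕ Fin K)) => ∑ q, pa.2 (Sum.inr q) * Dt q k l) :=
    fun k l => ContDiff.sum fun q _ => (hα (Sum.inr q)).mul contDiff_const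
  unfold slotFE
  refine ContDiff.sub (ContDiff.add (contDiff_const.mul ?_) (contDiff_const.mul ?_))
    (contDiff_const.mul ?_)
  · exact ContDiff.sum fun i _ => ContDiff.sum fun j _ => (hS i j).pow 2
  · exact ContDiff.sum fun k _ => ContDiff.sum fun l _ => (hT k l).pow 2
  · exact ContDiff.sum fun i _ => ContDiff.sum fun j _ => ContDiff.sum fun k _ =>
      ContDiff.sum fun l _ => (((hS i j).mul (hπ (j,k))).mul (hT k l)).mul (hπ (i,l))

end Auxiliary

set_option maxHeartbeats 2000000 in
/-- **Theorem 1, convergence of SLOTAlign.** For iterates generated by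
the alternating SLOTAlign updates with step sizes `0 < τ < 1/Lα` and
`0 < ε < η < 1/Lπ` (each `π^k` entrywise positive), any limit point `(π^∞, α^∞)` of a
convergent subsequence with `π^∞` entrywise positive is a critical point of
`F̄(π, α) = F(π, α) + I_C(π) + I_Θ(α)`: `π^∞ ∈ C`, `α^∞ ∈ Θ`,
`−∇_α F(π^∞, α^∞) ∈ N_Θ(α^∞)` and `−∇_π F(π^∞, α^∞) ∈ N_C(π^∞)`, i.e.
`⟨∇_α F(π^∞, α^∞), α − α^∞⟩ ≥ 0` for all `α ∈ Θ` and
`⟨∇_π F(π^∞, α^∞), π − π^∞⟩ ≥ 0` for all `π ∈ C`. -/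
theorem slotalign_converges_to_critical_point (n m K : ℕ)
    (Ds : Fin K → Matrix (Fin n) (Fin n) ℝ)
    (Dt : Fin K → Matrix (Fin m) (Fin m) ℝ)
    (Lα Lπ τ η ε : ℝ)
    (hLα : ∀ π ∈ transportSet n m, ∀ a b : EuclideanSpace ℝ (Fin K ⊕ Fin K),
      ‖gradient (fun x => slotFE Ds Dt π x) a - gradient (fun x => slotFE Ds Dt π x) b‖
        ≤ Lα * ‖a - b‖)
    (hLπ : ∀ α ∈ weightSet K, ∀ p q : EuclideanSpace ℝ (Fin n × Fin m),
      ‖gradient (fun x => slotFE Ds Dt x α) p - gradient (fun x => slotFE Ds Dt x α) q‖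
        ≤ Lπ * ‖p - q‖)
    (hτ : 0 < τ) (hτ' : τ < 1 / Lα)
    (hε : 0 < ε) (hεη : ε < η) (hη' : η < 1 / Lπ)
    (π : ℕ → EuclideanSpace ℝ (Fin n × Fin m))
    (α : ℕ → EuclideanSpace ℝ (Fin K ⊕ Fin K))
    (hπmem : ∀ k, π k ∈ transportSet n m)
    (hαmem : ∀ k, α k ∈ weightSet K)
    (hπpos : ∀ k p, 0 < π k p)
    (hαmin : ∀ k, ∀ a ∈ weightSet K,
      ⟪gradient (fun x => slotFE Ds Dt (π k) x) (α k), α (k + 1)⟫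
          + 1 / (2 * τ) * ‖α (k + 1) - α k‖ ^ 2
        ≤ ⟪gradient (fun x => slotFE Ds Dt (π k) x) (α k), a⟫
          + 1 / (2 * τ) * ‖a - α k‖ ^ 2)
    (hπmin : ∀ k, ∀ p ∈ transportSet n m,
      ⟪gradient (fun x => slotFE Ds Dt x (α (k + 1))) (π k), π (k + 1)⟫
          + (1 / η) * vecKL (π (k + 1)) (π k)
        ≤ ⟪gradient (fun x => slotFE Ds Dt x (α (k + 1))) (π k), p⟫
          + (1 / η) * vecKL p (π k))
    (φ : ℕ → ℕ) (hφ : StrictMono φ)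
    (πinf : EuclideanSpace ℝ (Fin n × Fin m))
    (αinf : EuclideanSpace ℝ (Fin K ⊕ Fin K))
    (hlim : Filter.Tendsto (fun k => (π (φ k), α (φ k))) Filter.atTop
      (nhds (πinf, αinf)))
    (hπinfpos : ∀ p, 0 < πinf p) :
    πinf ∈ transportSet n m ∧ αinf ∈ weightSet K ∧
    (∀ a ∈ weightSet K,
      0 ≤ ⟪gradient (fun x => slotFE Ds Dt πinf x) αinf, a - αinf⟫) ∧
    (∀ p ∈ transportSet n m,
      0 ≤ ⟪gradient (fun x => slotFE Ds Dt x αinf) πinf, p - πinf⟫) := by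
  classical
  -- abbreviations
  have hΦ : ContDiff ℝ 1 (fun pa : (EuclideanSpace ℝ (Fin n × Fin m)) ×
      (EuclideanSpace ℝ (Fin K ⊕ Fin K)) => slotFE Ds Dt pa.1 pa.2) := slotFE_contDiff Ds Dt
  have hdiff2 : ∀ u, Differentiable ℝ (fun x => slotFE Ds Dt u x) :=
    fun u => slice2_differentiable hΦ u
  have hdiff1 : ∀ u, Differentiable ℝ (fun x => slotFE Ds Dt x u) :=
    fun u => slice1_differentiable hΦ u
  -- positivity of constants
  have hηpos : 0 < η := hε.trans hεη
  have hLαpos : 0 < Lα := by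
    by_contra hle
    push_neg at hle
    have h1 : 1 / Lα ≤ 0 := one_div_nonpos.mpr hle
    linarith [hτ.trans hτ']
  have hLπpos : 0 < Lπ := by
    by_contra hle
    push_neg at hle
    have h1 : 1 / Lπ ≤ 0 := one_div_nonpos.mpr hle
    linarith [hηpos.trans hη']
  have hτLα : τ * Lα < 1 := (lt_div_iff₀ hLαpos).mp hτ'
  have hηLπ : η * Lπ < 1 := (lt_div_iff₀ hLπpos).mp hη'
  set c1 : ℝ := 1 / (2 * τ) - Lα / 2 with hc1def
  set c2 : ℝ := 1 / (2 * η) - Lπ / 2 with hc2def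
  have hc1 : 0 < c1 := by
    have : Lα / 2 < 1 / (2 * τ) := by
      rw [div_lt_div_iff₀ two_pos (by positivity)]
      nlinarith
    simp only [hc1def]; linarith
  have hc2 : 0 < c2 := by
    have : Lπ / 2 < 1 / (2 * η) := by
      rw [div_lt_div_iff₀ two_pos (by positivity)]
      nlinarith
    simp only [hc2def]; linarith
  -- subsequence convergences
  have hπφ : Filter.Tendsto (fun j => π (φ j)) Filter.atTop (nhds πinf) :=
    (continuous_fst.tendsto _).comp hlim
  have hαφ : Filter.Tendsto (fun j => α (φ j)) Filter.atTop (nhds αinf) :=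
    (continuous_snd.tendsto _).comp hlim
  have hevalπ : ∀ p, Filter.Tendsto (fun j => π (φ j) p) Filter.atTop (nhds (πinf p)) :=
    fun p => ((EuclideanSpace.proj (𝕜 := ℝ) p).continuous.tendsto πinf).comp hπφ
  have hevalα : ∀ p, Filter.Tendsto (fun j => α (φ j) p) Filter.atTop (nhds (αinf p)) :=
    fun p => ((EuclideanSpace.proj (𝕜 := ℝ) p).continuous.tendsto αinf).comp hαφ
  -- limit point memberships
  have hπinfmem : πinf ∈ transportSet n m := by
    refine ⟨fun p => ?_, fun i => ?_, fun k => ?_⟩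
    · exact ge_of_tendsto (hevalπ p)
        (Filter.Eventually.of_forall fun j => (hπmem (φ j)).1 p)
    · have hs : Filter.Tendsto (fun j => ∑ k', π (φ j) (i, k')) Filter.atTop
          (nhds (∑ k', πinf (i, k'))) :=
        tendsto_finset_sum _ fun k' _ => hevalπ (i, k')
      have he : (fun j => ∑ k', π (φ j) (i, k')) = fun _ => 1 / (n : ℝ) :=
        funext fun j => (hπmem (φ j)).2.1 i
      rw [he] at hs
      exact tendsto_nhds_unique hs tendsto_const_nhds
    · have hs : Filter.Tendsto (fun j => ∑ i', π (φ j) (i', k)) Filter.atTop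
          (nhds (∑ i', πinf (i', k))) :=
        tendsto_finset_sum _ fun i' _ => hevalπ (i', k)
      have he : (fun j => ∑ i', π (φ j) (i', k)) = fun _ => 1 / (m : ℝ) :=
        funext fun j => (hπmem (φ j)).2.2 k
      rw [he] at hs
      exact tendsto_nhds_unique hs tendsto_const_nhds
  have hαinfmem : αinf ∈ weightSet K := by
    refine ⟨fun p => ?_, ?_, ?_⟩
    · exact ge_of_tendsto (hevalα p)
        (Filter.Eventually.of_forall fun j => (hαmem (φ j)).1 p)
    · have hs : Filter.Tendsto (fun j => ∑ q, α (φ j) (Sum.inl q)) Filter.atTop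
          (nhds (∑ q, αinf (Sum.inl q))) :=
        tendsto_finset_sum _ fun q _ => hevalα (Sum.inl q)
      have he : (fun j => ∑ q, α (φ j) (Sum.inl q)) = fun _ => (1 : ℝ) :=
        funext fun j => (hαmem (φ j)).2.1
      rw [he] at hs
      exact (tendsto_nhds_unique hs tendsto_const_nhds)
    · have hs : Filter.Tendsto (fun j => ∑ q, α (φ j) (Sum.inr q)) Filter.atTop
          (nhds (∑ q, αinf (Sum.inr q))) :=
        tendsto_finset_sum _ fun q _ => hevalα (Sum.inr q)
      have he : (fun j => ∑ q, α (φ j) (Sum.inr q)) = fun _ => (1 : ℝ) :=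
        funext fun j => (hαmem (φ j)).2.2
      rw [he] at hs
      exact (tendsto_nhds_unique hs tendsto_const_nhds)
  -- sufficient decrease
  set E : ℕ → ℝ := fun k => slotFE Ds Dt (π k) (α k) with hEdef
  have hdec : ∀ k, E (k + 1) ≤ E k - c1 * ‖α (k + 1) - α k‖ ^ 2
      - c2 * ‖π (k + 1) - π k‖ ^ 2 := by
    intro k
    -- α-block
    have hd1 := descent_lemma (hdiff2 (π k)) (hLα (π k) (hπmem k)) (α k) (α (k + 1))
    have hm1 := hαmin k (α k) (hαmem k)
    have hz : ‖α k - α k‖ = 0 := by simp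
    have hsub1 : ⟪gradient (fun x => slotFE Ds Dt (π k) x) (α k), α (k + 1) - α k⟫
        = ⟪gradient (fun x => slotFE Ds Dt (π k) x) (α k), α (k + 1)⟫
          - ⟪gradient (fun x => slotFE Ds Dt (π k) x) (α k), α k⟫ :=
      inner_sub_right _ _ _
    have hτ2 : 0 < 2 * τ := by linarith
    have hstep1 : slotFE Ds Dt (π k) (α (k + 1)) ≤ slotFE Ds Dt (π k) (α k)
        - c1 * ‖α (k + 1) - α k‖ ^ 2 := by
      rw [hz] at hm1
      simp only [hc1def]
      nlinarith [sq_nonneg ‖α (k + 1) - α k‖]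
    -- π-block
    have hd2 := descent_lemma (hdiff1 (α (k + 1))) (hLπ (α (k + 1)) (hαmem (k + 1)))
      (π k) (π (k + 1))
    have hm2 := hπmin k (π k) (hπmem k)
    have hKL0 : vecKL (π k) (π k) = 0 := vecKL_self (hπpos k)
    have hpinsker : ‖π (k + 1) - π k‖ ^ 2 / 2 ≤ vecKL (π (k + 1)) (π k) :=
      transport_pinsker (hπmem (k + 1)) (hπmem k) (hπpos (k + 1)) (hπpos k)
    have hsub2 : ⟪gradient (fun x => slotFE Ds Dt x (α (k + 1))) (π k), π (k + 1) - π k⟫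
        = ⟪gradient (fun x => slotFE Ds Dt x (α (k + 1))) (π k), π (k + 1)⟫
          - ⟪gradient (fun x => slotFE Ds Dt x (α (k + 1))) (π k), π k⟫ :=
      inner_sub_right _ _ _
    have hηinv : (0:ℝ) < 1 / η := by positivity
    have hstep2 : slotFE Ds Dt (π (k + 1)) (α (k + 1)) ≤ slotFE Ds Dt (π k) (α (k + 1))
        - c2 * ‖π (k + 1) - π k‖ ^ 2 := by
      rw [hKL0] at hm2
      have hb : ⟪gradient (fun x => slotFE Ds Dt x (α (k + 1))) (π k), π (k + 1) - π k⟫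
          ≤ -(1 / η) * (‖π (k + 1) - π k‖ ^ 2 / 2) := by
        rw [hsub2]
        nlinarith [mul_le_mul_of_nonneg_left hpinsker hηinv.le]
      have h2η : 1 / η * (‖π (k + 1) - π k‖ ^ 2 / 2) = 1 / (2 * η) * ‖π (k + 1) - π k‖ ^ 2 := by
        rw [one_div_mul_eq_div, div_div, one_div_mul_eq_div]
      simp only [hc2def]
      nlinarith
    calc E (k + 1) = slotFE Ds Dt (π (k + 1)) (α (k + 1)) := rfl
      _ ≤ slotFE Ds Dt (π k) (α (k + 1)) - c2 * ‖π (k + 1) - π k‖ ^ 2 := hstep2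
      _ ≤ E k - c1 * ‖α (k + 1) - α k‖ ^ 2 - c2 * ‖π (k + 1) - π k‖ ^ 2 := by
          have := hstep1; simp only [hEdef]; linarith
  have hEanti : Antitone E := by
    apply antitone_nat_of_succ_le
    intro k
    have h1 : 0 ≤ c1 * ‖α (k + 1) - α k‖ ^ 2 := by positivity
    have h2 : 0 ≤ c2 * ‖π (k + 1) - π k‖ ^ 2 := by positivity
    linarith [hdec k]
  -- convergence of E
  have hEφ : Filter.Tendsto (fun j => E (φ j)) Filter.atTop
      (nhds (slotFE Ds Dt πinf αinf)) := by
    have h1 : Continuous (fun pa : (EuclideanSpace ℝ (Fin n × Fin m)) ×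
        (EuclideanSpace ℝ (Fin K ⊕ Fin K)) => slotFE Ds Dt pa.1 pa.2) := hΦ.continuous
    have h2 := (h1.tendsto (πinf, αinf)).comp hlim
    exact h2
  have hEφanti : Antitone fun j => E (φ j) := fun i j h => hEanti (hφ.monotone h)
  have hlb : ∀ j, slotFE Ds Dt πinf αinf ≤ E (φ j) := fun j => hEφanti.le_of_tendsto hEφ j
  have hlbE : ∀ k, slotFE Ds Dt πinf αinf ≤ E k :=
    fun k => le_trans (hlb k) (hEanti (hφ.le_apply))
  have hbdd : BddBelow (Set.range E) := ⟨slotFE Ds Dt πinf αinf, by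
    rintro x ⟨k, rfl⟩; exact hlbE k⟩
  have hEtend0 : Filter.Tendsto E Filter.atTop (nhds (⨅ k, E k)) :=
    tendsto_atTop_ciInf hEanti hbdd
  have hinf_eq : (⨅ k, E k) = slotFE Ds Dt πinf αinf :=
    tendsto_nhds_unique (hEtend0.comp hφ.tendsto_atTop) hEφ
  have hEconv : Filter.Tendsto E Filter.atTop (nhds (slotFE Ds Dt πinf αinf)) :=
    hinf_eq ▸ hEtend0
  have hdiff0 : Filter.Tendsto (fun k => E k - E (k + 1)) Filter.atTop (nhds 0) := by
    have h1 : Filter.Tendsto (fun k => E (k + 1)) Filter.atTop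
        (nhds (slotFE Ds Dt πinf αinf)) := hEconv.comp (Filter.tendsto_add_atTop_nat 1)
    simpa using hEconv.sub h1
  -- differences go to zero
  have hsqα : Filter.Tendsto (fun k => ‖α (k + 1) - α k‖ ^ 2) Filter.atTop (nhds 0) := by
    have hb : Filter.Tendsto (fun k => c1 * ‖α (k + 1) - α k‖ ^ 2) Filter.atTop (nhds 0) := by
      apply squeeze_zero (fun k => by positivity) (g := fun k => E k - E (k + 1)) _ hdiff0
      intro k
      show c1 * ‖α (k + 1) - α k‖ ^ 2 ≤ E k - E (k + 1)
      have h2 : 0 ≤ c2 * ‖π (k + 1) - π k‖ ^ 2 := by positivity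
      linarith [hdec k]
    have := hb.const_mul (1 / c1)
    simp only [← mul_assoc, one_div, inv_mul_cancel₀ (ne_of_gt hc1), one_mul, mul_zero] at this
    exact this
  have hsqπ : Filter.Tendsto (fun k => ‖π (k + 1) - π k‖ ^ 2) Filter.atTop (nhds 0) := by
    have hb : Filter.Tendsto (fun k => c2 * ‖π (k + 1) - π k‖ ^ 2) Filter.atTop (nhds 0) := by
      apply squeeze_zero (fun k => by positivity) (g := fun k => E k - E (k + 1)) _ hdiff0
      intro k
      show c2 * ‖π (k + 1) - π k‖ ^ 2 ≤ E k - E (k + 1)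
      have h2 : 0 ≤ c1 * ‖α (k + 1) - α k‖ ^ 2 := by positivity
      linarith [hdec k]
    have := hb.const_mul (1 / c2)
    simp only [← mul_assoc, one_div, inv_mul_cancel₀ (ne_of_gt hc2), one_mul, mul_zero] at this
    exact this
  have hnα : Filter.Tendsto (fun k => ‖α (k + 1) - α k‖) Filter.atTop (nhds 0) := by
    have := (Real.continuous_sqrt.tendsto 0).comp hsqα
    simp only [Real.sqrt_zero] at this
    refine this.congr fun k => ?_
    exact Real.sqrt_sq (norm_nonneg _)
  have hnπ : Filter.Tendsto (fun k => ‖π (k + 1) - π k‖) Filter.atTop (nhds 0) := by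
    have := (Real.continuous_sqrt.tendsto 0).comp hsqπ
    simp only [Real.sqrt_zero] at this
    refine this.congr fun k => ?_
    exact Real.sqrt_sq (norm_nonneg _)
  have hdα : Filter.Tendsto (fun k => α (k + 1) - α k) Filter.atTop (nhds 0) :=
    tendsto_zero_iff_norm_tendsto_zero.2 hnα
  have hdπ : Filter.Tendsto (fun k => π (k + 1) - π k) Filter.atTop (nhds 0) :=
    tendsto_zero_iff_norm_tendsto_zero.2 hnπ
  have hα1 : Filter.Tendsto (fun j => α (φ j + 1)) Filter.atTop (nhds αinf) := by
    have h := hαφ.add (hdα.comp hφ.tendsto_atTop)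
    rw [add_zero] at h
    refine h.congr fun j => ?_
    show α (φ j) + (α (φ j + 1) - α (φ j)) = α (φ j + 1)
    abel
  have hπ1 : Filter.Tendsto (fun j => π (φ j + 1)) Filter.atTop (nhds πinf) := by
    have h := hπφ.add (hdπ.comp hφ.tendsto_atTop)
    rw [add_zero] at h
    refine h.congr fun j => ?_
    show π (φ j) + (π (φ j + 1) - π (φ j)) = π (φ j + 1)
    abel
  -- gradient convergences
  have hGconv : Filter.Tendsto
      (fun j => gradient (fun x => slotFE Ds Dt (π (φ j)) x) (α (φ j))) Filter.atTop
      (nhds (gradient (fun x => slotFE Ds Dt πinf x) αinf)) :=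
 by
    have h1 := ((grad_slice2_continuous hΦ).tendsto (πinf, αinf)).comp hlim
    exact h1
  have hG'conv : Filter.Tendsto
      (fun j => gradient (fun x => slotFE Ds Dt x (α (φ j + 1))) (π (φ j))) Filter.atTop
      (nhds (gradient (fun x => slotFE Ds Dt x αinf) πinf)) :=
 by
    have h1 := ((grad_slice1_continuous hΦ).tendsto (πinf, αinf)).comp (hπφ.prodMk_nhds hα1)
    exact h1
  -- key limiting inequality, α block
  have keyα : ∀ a ∈ weightSet K,
      ⟪gradient (fun x => slotFE Ds Dt πinf x) αinf, αinf⟫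
        ≤ ⟪gradient (fun x => slotFE Ds Dt πinf x) αinf, a⟫
          + 1 / (2 * τ) * ‖a - αinf‖ ^ 2 := by
    intro a ha
    have hL : Filter.Tendsto (fun j =>
        ⟪gradient (fun x => slotFE Ds Dt (π (φ j)) x) (α (φ j)), α (φ j + 1)⟫
          + 1 / (2 * τ) * ‖α (φ j + 1) - α (φ j)‖ ^ 2) Filter.atTop
        (nhds (⟪gradient (fun x => slotFE Ds Dt πinf x) αinf, αinf⟫)) := by
      have h1 := hGconv.inner (𝕜 := ℝ) hα1
      have h2 := (hsqα.comp hφ.tendsto_atTop).const_mul (1 / (2 * τ))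
      simpa using h1.add h2
    have hR : Filter.Tendsto (fun j =>
        ⟪gradient (fun x => slotFE Ds Dt (π (φ j)) x) (α (φ j)), a⟫
          + 1 / (2 * τ) * ‖a - α (φ j)‖ ^ 2) Filter.atTop
        (nhds (⟪gradient (fun x => slotFE Ds Dt πinf x) αinf, a⟫
          + 1 / (2 * τ) * ‖a - αinf‖ ^ 2)) := by
      have h1 := hGconv.inner (𝕜 := ℝ) (tendsto_const_nhds (x := a))
      have h2 := ((hαφ.const_sub a).norm.pow 2).const_mul (1 / (2 * τ))
      exact h1.add h2
    exact le_of_tendsto_of_tendsto' hL hR fun j => hαmin (φ j) a ha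
  -- key limiting inequality, π block
  have keyπ : ∀ p ∈ transportSet n m,
      ⟪gradient (fun x => slotFE Ds Dt x αinf) πinf, πinf⟫
        ≤ ⟪gradient (fun x => slotFE Ds Dt x αinf) πinf, p⟫
          + 1 / η * vecKL p πinf := by
    intro p hp
    have hL : Filter.Tendsto (fun j =>
        ⟪gradient (fun x => slotFE Ds Dt x (α (φ j + 1))) (π (φ j)), π (φ j + 1)⟫)
        Filter.atTop
        (nhds (⟪gradient (fun x => slotFE Ds Dt x αinf) πinf, πinf⟫)) :=
      hG'conv.inner (𝕜 := ℝ) hπ1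
    have hR : Filter.Tendsto (fun j =>
        ⟪gradient (fun x => slotFE Ds Dt x (α (φ j + 1))) (π (φ j)), p⟫
          + 1 / η * vecKL p (π (φ j))) Filter.atTop
        (nhds (⟪gradient (fun x => slotFE Ds Dt x αinf) πinf, p⟫
          + 1 / η * vecKL p πinf)) := by
      have h1 := hG'conv.inner (𝕜 := ℝ) (tendsto_const_nhds (x := p))
      have h2 : Filter.Tendsto (fun j => vecKL p (π (φ j))) Filter.atTop
          (nhds (vecKL p πinf)) :=
        vecKL_tendsto_snd hp.1 hπinfpos hevalπ
      exact h1.add (h2.const_mul (1 / η))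
    refine le_of_tendsto_of_tendsto' hL hR fun j => ?_
    have hm := hπmin (φ j) p hp
    have hKL : 0 ≤ vecKL (π (φ j + 1)) (π (φ j)) :=
      vecKL_nonneg (hπpos (φ j + 1)) (hπpos (φ j))
    have : (0:ℝ) ≤ 1 / η * vecKL (π (φ j + 1)) (π (φ j)) := by positivity
    linarith
  refine ⟨hπinfmem, hαinfmem, ?_, ?_⟩
  -- variational inequality, α block
  · intro a ha
    set G := gradient (fun x => slotFE Ds Dt πinf x) αinf with hGdef
    set d := a - αinf with hddef
    have hstep : ∀ j : ℕ, -(1 / (2 * τ)) * (1 / (j + 1 : ℝ)) * ‖d‖ ^ 2 ≤ ⟪G, d⟫ := by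
      intro j
      set t : ℝ := 1 / (j + 1 : ℝ) with htdef
      have ht0 : 0 < t := by positivity
      have ht1 : t ≤ 1 := by
        rw [htdef, div_le_one (by positivity)]
        simp
      have hmem := weightSet_comb hαinfmem ha ht0.le ht1
      have hk := keyα (αinf + t • (a - αinf)) hmem
      have hinner : ⟪G, αinf + t • (a - αinf)⟫ = ⟪G, αinf⟫ + t * ⟪G, d⟫ := by
        rw [inner_add_right, real_inner_smul_right, hddef]
      have hnorm : ‖αinf + t • (a - αinf) - αinf‖ ^ 2 = t ^ 2 * ‖d‖ ^ 2 := by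
        rw [add_sub_cancel_left, norm_smul]
        rw [Real.norm_eq_abs, mul_pow, sq_abs, hddef]
      rw [hinner, hnorm] at hk
      have h2 : 0 ≤ t * (⟪G, d⟫ + 1 / (2 * τ) * t * ‖d‖ ^ 2) := by nlinarith
      have h3 : 0 ≤ ⟪G, d⟫ + 1 / (2 * τ) * t * ‖d‖ ^ 2 :=
        (mul_nonneg_iff_of_pos_left ht0).mp h2
      nlinarith
    have htend : Filter.Tendsto
        (fun j : ℕ => -(1 / (2 * τ)) * (1 / (j + 1 : ℝ)) * ‖d‖ ^ 2) Filter.atTop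
        (nhds 0) := by
      have := (tendsto_one_div_add_atTop_nhds_zero_nat.const_mul
        (-(1 / (2 * τ)))).mul_const (‖d‖ ^ 2)
      simpa using this
    exact le_of_tendsto htend (Filter.Eventually.of_forall hstep)
  -- variational inequality, π block
  · intro p hp
    set G := gradient (fun x => slotFE Ds Dt x αinf) πinf with hGdef
    set d := p - πinf with hddef
    set KLj : ℕ → ℝ := fun j =>
      vecKL (fun e => πinf e + (1 / (j + 1 : ℝ)) * (p e - πinf e)) πinf with hKLjdef
    have hstep : ∀ j : ℕ, -(1 / η) * (KLj j / (1 / (j + 1 : ℝ))) ≤ ⟪G, d⟫ := by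
      intro j
      set t : ℝ := 1 / (j + 1 : ℝ) with htdef
      have ht0 : 0 < t := by positivity
      have ht1 : t ≤ 1 := by
        rw [htdef, div_le_one (by positivity)]
        simp
      have hmem := transportSet_comb hπinfmem hp ht0.le ht1
      have hk := keyπ (πinf + t • (p - πinf)) hmem
      have hinner : ⟪G, πinf + t • (p - πinf)⟫ = ⟪G, πinf⟫ + t * ⟪G, d⟫ := by
        rw [inner_add_right, real_inner_smul_right, hddef]
      have hklrw : vecKL (πinf + t • (p - πinf)) πinf = KLj j := by
        rw [hKLjdef]
        unfold vecKL
        apply Finset.sum_congr rfl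
        intro e _
        have he : (πinf + t • (p - πinf)) e = πinf e + t * (p e - πinf e) := by
          rw [PiLp.add_apply, PiLp.smul_apply, PiLp.sub_apply, smul_eq_mul]
        rw [he]
      rw [hinner, hklrw] at hk
      have h2 : 0 ≤ t * (⟪G, d⟫ + 1 / η * (KLj j / t)) := by
        have ht' : t ≠ 0 := ne_of_gt ht0
        have : t * (1 / η * (KLj j / t)) = 1 / η * KLj j := by
          rw [show t * (1 / η * (KLj j / t)) = 1 / η * KLj j * (t / t) by ring,
            div_self ht', mul_one]
        rw [mul_add, this]
        nlinarith
      have h3 : 0 ≤ ⟪G, d⟫ + 1 / η * (KLj j / t) :=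
        (mul_nonneg_iff_of_pos_left ht0).mp h2
      linarith
    have htend : Filter.Tendsto (fun j : ℕ => -(1 / η) * (KLj j / (1 / (j + 1 : ℝ))))
        Filter.atTop (nhds 0) := by
      rw [hKLjdef]
      have hs := vecKL_slope_tendsto (fun e => πinf e) (fun e => p e - πinf e) hπinfpos
      have := hs.const_mul (-(1 / η))
      simpa using this
    exact le_of_tendsto htend (Filter.Eventually.of_forall hstep)
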